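/- Let k ≥ 1 be a positive integer and let G = (U,V,E) be a bipartite graph such that |Γ(S)| ≥ (1/k)·|S| for every S ⊆ U and every S ⊆ V. Then G has a k-star covering. -/

import Mathlib

open scoped Classical
set_option linter.unusedSectionVars false
open Finset

noncomputable section

variable {U V : Type*}

/-- The neighbourhood `Γ(S) ⊆ V` of a set `S` of left vertices of the bipartite
graph with edge set `E ⊆ U × V`. -/
def nbhd (E : Finset (U × V)) (S : Finset U) : Finset V :=
  (E.filter fun p => p.1 ∈ S).image Prod.snd

/-- The neighbourhood `Γ(T) ⊆ U` of a set `T` of right vertices. -/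
def nbhdR (E : Finset (U × V)) (T : Finset V) : Finset U :=
  (E.filter fun p => p.2 ∈ T).image Prod.fst

/-- The degree of a left vertex `u` in the bipartite graph with edge set `E`. -/
def degL (E : Finset (U × V)) (u : U) : ℕ := (E.filter fun p => p.1 = u).card

/-- The degree of a right vertex `v` in the bipartite graph with edge set `E`. -/
def degR (E : Finset (U × V)) (v : V) : ℕ := (E.filter fun p => p.2 = v).card

/-- The bipartite graph on the vertex set `U ⊕ V` determined by an edge set
`F ⊆ U × V`. -/
def mkGraph (F : Finset (U × V)) : SimpleGraph (U ⊕ V) :=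
  SimpleGraph.fromRel fun x y => ∃ p ∈ F, x = Sum.inl p.1 ∧ y = Sum.inr p.2

/-- The edges of `F` lying inside the connected component `c` of `mkGraph F`. -/
def componentEdges (F : Finset (U × V)) (c : (mkGraph F).ConnectedComponent) :
    Finset (U × V) :=
  F.filter fun p => (mkGraph F).connectedComponentMk (Sum.inl p.1) = c

/-- An `(s,t)`-matching in the bipartite graph `G = (U,V,E)`: a subset `F ⊆ E` such
that in `H = (U,V,F)` every connected component is a tree (i.e. `H` is acyclic) with
at most `t` edges, and every vertex `u ∈ U` has degree exactly `s` in `H`. -/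
def IsSTMatching (s t : ℕ) (E F : Finset (U × V)) : Prop :=
  F ⊆ E ∧ (mkGraph F).IsAcyclic ∧
    (∀ c : (mkGraph F).ConnectedComponent, (componentEdges F c).card ≤ t) ∧
    ∀ u : U, degL F u = s

/-- A `k`-star covering of the bipartite graph `G = (U,V,E)`: a subset `F ⊆ E` such
that in `H = (U,V,F)` every vertex of `U ∪ V` has degree at least `1` and every
connected component is a star with at most `k` edges (all edges of the component
share a common vertex). -/
def IsStarCover (k : ℕ) (E F : Finset (U × V)) : Prop :=
  F ⊆ E ∧
    (∀ x : U ⊕ V, ∃ p ∈ F, x = Sum.inl p.1 ∨ x = Sum.inr p.2) ∧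
    ∀ c : (mkGraph F).ConnectedComponent,
      (componentEdges F c).card ≤ k ∧
      ∃ x : U ⊕ V, ∀ p ∈ componentEdges F c, Sum.inl p.1 = x ∨ Sum.inr p.2 = x

namespace SCaux
variable {α : Type*}

def Per (h : α → α) (x : α) : Prop := ∃ n, 0 < n ∧ h^[n] x = x

theorem iter_mul {h : α → α} {x : α} {n : ℕ} (hp : h^[n] x = x) :
    ∀ t, h^[n * t] x = x := by
  intro t; induction t with
  | zero => simp
  | succ t ih =>
    rw [Nat.mul_succ, Function.iterate_add_apply, hp, ih]

theorem per_apply {h : α → α} {x : α} (hx : Per h x) : Per h (h x) := by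
  obtain ⟨n, hn, hxn⟩ := hx
  exact ⟨n, hn, by rw [← Function.iterate_succ_apply, Function.iterate_succ_apply', hxn]⟩

theorem per_iter {h : α → α} {x : α} (hx : Per h x) (m : ℕ) : Per h (h^[m] x) := by
  induction m with
  | zero => simpa using hx
  | succ m ih => rw [Function.iterate_succ_apply']; exact per_apply ih

theorem per_inj {h : α → α} {a b : α} (ha : Per h a) (hb : Per h b)
    (hab : h a = h b) : a = b := by
  obtain ⟨n, hn, han⟩ := ha
  obtain ⟨m, hm, hbm⟩ := hb
  have haN : h^[n * m] a = a := iter_mul han m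
  have hbN : h^[n * m] b = b := by rw [mul_comm]; exact iter_mul hbm n
  obtain ⟨M, hM⟩ : ∃ M, n * m = M + 1 := ⟨n * m - 1, (Nat.succ_pred_eq_of_pos (Nat.mul_pos hn hm)).symm⟩
  rw [hM] at haN hbN
  calc a = h^[M+1] a := haN.symm
    _ = h^[M] (h a) := Function.iterate_succ_apply h M a
    _ = h^[M] (h b) := by rw [hab]
    _ = h^[M+1] b := (Function.iterate_succ_apply h M b).symm
    _ = b := hbN

variable {U V : Type*} [Fintype U] [Fintype V]

def h0 (f : U → V) (g : V → U) : U ⊕ V → U ⊕ V :=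
  Sum.elim (fun u => Sum.inr (f u)) (fun v => Sum.inl (g v))

def hh (f : U → V) (g : V → U) : U ⊕ V → U ⊕ V := fun x =>
  if hp : Per (h0 f g) x ∧ x.isRight = true then
    (h0 f g)^[Nat.find hp.1 - 1] x
  else h0 f g x

variable (f : U → V) (g : V → U)

theorem side_h0 (x : U ⊕ V) : (h0 f g x).isLeft = !x.isLeft := by
  cases x <;> simp [h0]

theorem hh_spec (x : U ⊕ V) :
    (hh f g x = h0 f g x ∧ ¬(Per (h0 f g) x ∧ x.isRight = true)) ∨
    (h0 f g (hh f g x) = x ∧ Per (h0 f g) x ∧ x.isRight = true ∧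
      Per (h0 f g) (hh f g x)) := by
  unfold hh
  split_ifs with hp
  · right
    have hfind := Nat.find_spec hp.1
    set n := Nat.find hp.1 with hn
    obtain ⟨M, hM⟩ : ∃ M, n = M + 1 := ⟨n - 1, by omega⟩
    refine ⟨?_, hp.1, hp.2, ?_⟩
    · have hx : (h0 f g)^[M+1] x = x := by rw [← hM]; exact hfind.2
      rw [Function.iterate_succ_apply'] at hx
      rw [hM]
      simpa using hx
    · refine ⟨n, hfind.1, ?_⟩
      rw [← Function.iterate_add_apply, add_comm, Function.iterate_add_apply, hfind.2]
  · left; exact ⟨rfl, hp⟩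

theorem side_hh (x : U ⊕ V) : (hh f g x).isLeft = !x.isLeft := by
  rcases hh_spec f g x with ⟨h1, _⟩ | ⟨h2, _⟩
  · rw [h1]; exact side_h0 f g x
  · have := side_h0 f g (hh f g x)
    rw [h2] at this
    cases hb : (hh f g x).isLeft <;> rw [hb] at this <;> revert this <;> cases x <;> simp

theorem hh_eq_of_left {x : U ⊕ V} (hx : x.isLeft = true) : hh f g x = h0 f g x := by
  unfold hh
  rw [dif_neg]
  rintro ⟨-, hr⟩
  cases x <;> simp_all

theorem hh_eq_of_not_per {x : U ⊕ V} (hx : ¬ Per (h0 f g) x) : hh f g x = h0 f g x := by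
  unfold hh
  rw [dif_neg]
  rintro ⟨hp, -⟩; exact hx hp

theorem edgeL {E : Finset (U × V)} (hf : ∀ u, (u, f u) ∈ E) {u : U} {v : V}
    (h : hh f g (Sum.inl u) = Sum.inr v) : (u, v) ∈ E := by
  rcases hh_spec f g (Sum.inl u) with ⟨h1, _⟩ | ⟨_, _, h2, _⟩
  · rw [h1] at h
    simp only [h0, Sum.elim_inl, Sum.inr.injEq] at h
    rw [← h]; exact hf u
  · simp at h2

theorem edgeR {E : Finset (U × V)} (hf : ∀ u, (u, f u) ∈ E) (hg : ∀ v, (g v, v) ∈ E)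
    {u : U} {v : V} (h : hh f g (Sum.inr v) = Sum.inl u) : (u, v) ∈ E := by
  rcases hh_spec f g (Sum.inr v) with ⟨h1, _⟩ | ⟨h2, _⟩
  · rw [h1] at h
    simp only [h0, Sum.elim_inr, Sum.inl.injEq] at h
    rw [← h]; exact hg v
  · rw [h] at h2
    simp only [h0, Sum.elim_inl, Sum.inr.injEq] at h2
    rw [← h2]; exact hf u


theorem fiber_h0_left (u : U) :
    (univ.filter fun y => h0 f g y = Sum.inl u) =
      (univ.filter fun v => g v = u).image Sum.inr := by
  ext y
  cases y with
  | inl u' => simp only [mem_filter, mem_univ, true_and, mem_image]; simp [h0]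
  | inr v => simp only [mem_filter, mem_univ, true_and, mem_image]; simp [h0]

theorem fiber_h0_right (v : V) :
    (univ.filter fun y => h0 f g y = Sum.inr v) =
      (univ.filter fun u => f u = v).image Sum.inl := by
  ext y
  cases y with
  | inl u' => simp only [mem_filter, mem_univ, true_and, mem_image]; simp [h0]
  | inr v' => simp only [mem_filter, mem_univ, true_and, mem_image]; simp [h0]

theorem fiber_hh_right {k : ℕ} (hfk : ∀ v, (univ.filter fun u => f u = v).card ≤ k)
    (v : V) : (univ.filter fun y => hh f g y = Sum.inr v).card ≤ k := by
  have hsub : (univ.filter fun y => hh f g y = Sum.inr v) ⊆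
      (univ.filter fun y => h0 f g y = Sum.inr v) := by
    intro y hy
    simp only [mem_filter, mem_univ, true_and] at hy ⊢
    have hside : y.isLeft = true := by
      have := side_hh f g y
      rw [hy] at this
      cases hb : y.isLeft
      · rw [hb] at this; simp at this
      · rfl
    rw [← hh_eq_of_left f g hside]; exact hy
  calc _ ≤ _ := card_le_card hsub
    _ = (univ.filter fun u => f u = v).card := by
        rw [fiber_h0_right, card_image_of_injective _ Sum.inl_injective]
    _ ≤ k := hfk v

theorem fiber_hh_left {k : ℕ} (hgk : ∀ u, (univ.filter fun v => g v = u).card ≤ k)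
    (u : U) : (univ.filter fun y => hh f g y = Sum.inl u).card ≤ k := by
  set Fib := univ.filter (fun y => h0 f g y = Sum.inl u) with hFibdef
  have hFibcard : Fib.card ≤ k := by
    rw [hFibdef, fiber_h0_left, card_image_of_injective _ Sum.inr_injective]
    exact hgk u
  by_cases hperu : Per (h0 f g) (Sum.inl u)
  · obtain ⟨n, hn, hun⟩ := hperu
    set w := (h0 f g)^[n-1] (Sum.inl u) with hwdef
    have hwP : Per (h0 f g) w := per_iter ⟨n, hn, hun⟩ _
    have hwf : h0 f g w = Sum.inl u := by
      obtain ⟨M, hM⟩ : ∃ M, n = M + 1 := ⟨n - 1, by omega⟩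
      have hx : (h0 f g)^[M+1] (Sum.inl u) = Sum.inl u := by rw [← hM]; exact hun
      rw [Function.iterate_succ_apply'] at hx
      rw [hwdef, hM]
      simpa using hx
    have hwFib : w ∈ Fib := by
      rw [hFibdef]; simp only [mem_filter, mem_univ, true_and]; exact hwf
    have hsub : (univ.filter fun y => hh f g y = Sum.inl u) ⊆
        insert (Sum.inr (f u)) (Fib.erase w) := by
      intro y hy
      simp only [mem_filter, mem_univ, true_and] at hy
      rcases hh_spec f g y with ⟨h1, hneg⟩ | ⟨h2, _, _, h2d⟩
      · have hyFib : y ∈ Fib := by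
          rw [hFibdef]; simp only [mem_filter, mem_univ, true_and]
          rw [← h1]; exact hy
        have hynw : y ≠ w := by
          intro he
          apply hneg
          refine ⟨he ▸ hwP, ?_⟩
          have hside := side_h0 f g y
          have hy0 : h0 f g y = Sum.inl u := by rw [← h1]; exact hy
          rw [hy0] at hside
          cases y <;> simp_all
        exact mem_insert_of_mem (mem_erase.mpr ⟨hynw, hyFib⟩)
      · rw [hy] at h2
        simp only [h0, Sum.elim_inl] at h2
        rw [← h2]
        exact mem_insert_self _ _
    have h1 : Fib.card ≥ 1 := Finset.card_pos.mpr ⟨w, hwFib⟩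
    calc (univ.filter fun y => hh f g y = Sum.inl u).card
        ≤ (insert (Sum.inr (f u)) (Fib.erase w)).card := card_le_card hsub
      _ ≤ (Fib.erase w).card + 1 := card_insert_le _ _
      _ = (Fib.card - 1) + 1 := by rw [card_erase_of_mem hwFib]
      _ ≤ k := by omega
  · have hsub : (univ.filter fun y => hh f g y = Sum.inl u) ⊆ Fib := by
      intro y hy
      simp only [mem_filter, mem_univ, true_and] at hy
      rcases hh_spec f g y with ⟨h1, _⟩ | ⟨h2, _, _, h2d⟩
      · rw [hFibdef]; simp only [mem_filter, mem_univ, true_and]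
        rw [← h1]; exact hy
      · exfalso; apply hperu; rw [← hy]; exact h2d
    exact le_trans (card_le_card hsub) hFibcard

theorem hh_per_of_per {x : U ⊕ V} (hx : Per (h0 f g) x) : Per (h0 f g) (hh f g x) := by
  rcases hh_spec f g x with ⟨h1, _⟩ | ⟨_, _, _, h2d⟩
  · rw [h1]; exact per_apply hx
  · exact h2d

theorem two_cycle_left {x : U ⊕ V} (hx : Per (h0 f g) x) (hl : x.isLeft = true) :
    hh f g (hh f g x) = x := by
  have e1 : hh f g x = h0 f g x := hh_eq_of_left f g hl
  rw [e1]
  rcases hh_spec f g (h0 f g x) with ⟨_, hneg⟩ | ⟨h2a, _, _, h2d⟩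
  · exfalso
    apply hneg
    refine ⟨per_apply hx, ?_⟩
    have := side_h0 f g x
    rw [hl] at this
    cases hb : h0 f g x <;> simp_all
  · exact per_inj h2d hx h2a

theorem two_cycle {x : U ⊕ V} (hx : Per (hh f g) x) : hh f g (hh f g x) = x := by
  by_cases hC : ∃ i, Per (h0 f g) ((hh f g)^[i] x)
  · obtain ⟨i, hi⟩ := hC
    -- produce a left periodic point in the hh-orbit
    obtain ⟨j, hwP, hwL⟩ : ∃ j, Per (h0 f g) ((hh f g)^[j] x) ∧
        ((hh f g)^[j] x).isLeft = true := by
      cases hb : ((hh f g)^[i] x).isLeft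
      · refine ⟨i + 1, ?_, ?_⟩
        · rw [Function.iterate_succ_apply']; exact hh_per_of_per f g hi
        · rw [Function.iterate_succ_apply', side_hh, hb]; rfl
      · exact ⟨i, hi, hb⟩
    set w := (hh f g)^[j] x with hwdef
    have hww : hh f g (hh f g w) = w := two_cycle_left f g hwP hwL
    obtain ⟨n, hn, hxn⟩ := hx
    have hx_eq : (hh f g)^[n * (j+1) - j] w = x := by
      rw [hwdef, ← Function.iterate_add_apply]
      have hje : (n * (j+1) - j) + j = n * (j + 1) := by
        have : j + 1 ≤ n * (j + 1) := Nat.le_mul_of_pos_left _ hn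
        omega
      rw [hje]
      exact iter_mul hxn (j + 1)
    have horb : ∀ m, (hh f g)^[m] w = w ∨ (hh f g)^[m] w = hh f g w := by
      intro m
      induction m with
      | zero => left; rfl
      | succ m ih =>
        rw [Function.iterate_succ_apply']
        rcases ih with h | h
        · right; rw [h]
        · left; rw [h]; exact hww
    rcases horb (n * (j+1) - j) with h | h <;> rw [← hx_eq, h]
    · exact hww
    · rw [hww]
  · push_neg at hC
    exfalso
    have hiter : ∀ m, (hh f g)^[m] x = (h0 f g)^[m] x := by
      intro m
      induction m with
      | zero => rfl
      | succ m ih =>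
        rw [Function.iterate_succ_apply', Function.iterate_succ_apply', ← ih]
        exact hh_eq_of_not_per f g (by rw [ih]; rw [← ih]; exact hC m)
    obtain ⟨n, hn, hxn⟩ := hx
    apply hC 0
    simp only [Function.iterate_zero_apply]
    exact ⟨n, hn, by rw [← hiter]; exact hxn⟩


theorem exists_reach (x : U ⊕ V) :
    ∃ m, m ≤ Fintype.card (U ⊕ V) ∧ Per (hh f g) ((hh f g)^[m] x) := by
  have hcard : Fintype.card (U ⊕ V) < Fintype.card (Fin (Fintype.card (U ⊕ V) + 1)) := by
    simp
  obtain ⟨a, b, hab, he⟩ := Fintype.exists_ne_map_eq_of_card_lt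
    (fun i : Fin (Fintype.card (U ⊕ V) + 1) => (hh f g)^[(i : ℕ)] x) hcard
  rcases lt_or_gt_of_ne (fun h : (a : ℕ) = (b : ℕ) => hab (Fin.ext h)) with hlt | hlt
  · refine ⟨a, by omega, (b : ℕ) - a, by omega, ?_⟩
    rw [← Function.iterate_add_apply]
    have : (b : ℕ) - a + a = b := by omega
    rw [this]; exact he.symm
  · refine ⟨b, by omega, (a : ℕ) - b, by omega, ?_⟩
    rw [← Function.iterate_add_apply]
    have : (a : ℕ) - b + b = a := by omega
    rw [this]; exact he

def Rlt (y x : U ⊕ V) : Prop :=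
  hh f g y = x ∧ ¬(Per (hh f g) y ∧ y.isLeft = true)

theorem reachEx (x : U ⊕ V) : ∃ m, Per (hh f g) ((hh f g)^[m] x) :=
  ⟨(exists_reach f g x).choose, (exists_reach f g x).choose_spec.2⟩

/-- hitting time to the periodic part -/
def Tm (x : U ⊕ V) : ℕ := Nat.find (reachEx f g x)

theorem Tm_spec (x : U ⊕ V) : Per (hh f g) ((hh f g)^[Tm f g x] x) :=
  Nat.find_spec (reachEx f g x)

theorem Tm_min {x : U ⊕ V} {m : ℕ} (h : Per (hh f g) ((hh f g)^[m] x)) :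
    Tm f g x ≤ m := Nat.find_min' (reachEx f g x) h

theorem Tm_le (x : U ⊕ V) : Tm f g x ≤ Fintype.card (U ⊕ V) := by
  obtain ⟨m, hm, hp⟩ := exists_reach f g x
  exact le_trans (Tm_min f g hp) hm

def nu (x : U ⊕ V) : ℕ :=
  if Per (hh f g) x then (if x.isLeft = true then 0 else 1) else 2 + Tm f g x

theorem nu_le (x : U ⊕ V) : nu f g x ≤ 2 + Fintype.card (U ⊕ V) := by
  unfold nu
  split_ifs
  · omega
  · omega
  · have := Tm_le f g x; omega

theorem nu_lt {y x : U ⊕ V} (h : Rlt f g y x) : nu f g x < nu f g y := by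
  obtain ⟨hyx, hnot⟩ := h
  by_cases hpy : Per (hh f g) y
  · have hyL : y.isLeft = false := by
      cases hb : y.isLeft
      · rfl
      · exact absurd ⟨hpy, hb⟩ hnot
    have hpx : Per (hh f g) x := by rw [← hyx]; exact per_apply hpy
    have hxL : x.isLeft = true := by rw [← hyx, side_hh, hyL]; rfl
    unfold nu
    rw [if_pos hpx, if_pos hxL, if_pos hpy, if_neg (by rw [hyL]; simp)]
    omega
  · have hTy : 0 < Tm f g y := by
      rcases Nat.eq_zero_or_pos (Tm f g y) with h0 | h0
      · exfalso; apply hpy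
        have := Tm_spec f g y
        rw [h0] at this
        simpa using this
      · exact h0
    have hTx : Tm f g x ≤ Tm f g y - 1 := by
      apply Tm_min
      have : (hh f g)^[Tm f g y] y = (hh f g)^[Tm f g y - 1] x := by
        obtain ⟨M, hM⟩ : ∃ M, Tm f g y = M + 1 := ⟨Tm f g y - 1, by omega⟩
        rw [hM, Function.iterate_succ_apply, hyx]
        simp [hM]
      rw [← this]
      exact Tm_spec f g y
    unfold nu
    rw [if_neg hpy]
    by_cases hpx : Per (hh f g) x
    · rw [if_pos hpx]; split_ifs <;> omega
    · rw [if_neg hpx]; omega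

theorem wf_Rlt : WellFounded (Rlt f g) := by
  have hsub : Subrelation (Rlt f g)
      (InvImage Nat.lt (fun x => (2 + Fintype.card (U ⊕ V)) - nu f g x)) := by
    intro y x h
    have h1 := nu_lt f g h
    have h2 := nu_le f g y
    have h3 := nu_le f g x
    show (2 + Fintype.card (U ⊕ V)) - nu f g y < (2 + Fintype.card (U ⊕ V)) - nu f g x
    omega
  exact Subrelation.wf hsub (InvImage.wf _ Nat.lt_wfRel.wf)

def pending : U ⊕ V → Prop :=
  (wf_Rlt f g).fix (fun x ih => ∀ y (h : Rlt f g y x), ¬ ih y h)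

theorem pending_iff (x : U ⊕ V) :
    pending f g x ↔ ∀ y, Rlt f g y x → ¬ pending f g y := by
  have := WellFounded.fix_eq (wf_Rlt f g)
    (fun x ih => ∀ y (h : Rlt f g y x), ¬ ih y h) x
  exact iff_of_eq this

theorem not_pending_hh {x : U ⊕ V} (hx : pending f g x) : ¬ pending f g (hh f g x) := by
  by_cases hc : Per (hh f g) x ∧ x.isLeft = true
  · have h2 : hh f g (hh f g x) = x := two_cycle f g hc.1
    have hr : Rlt f g (hh f g x) x := by
      refine ⟨h2, ?_⟩
      rintro ⟨-, hL⟩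
      rw [side_hh, hc.2] at hL
      simp at hL
    exact (pending_iff f g x).mp hx _ hr
  · intro hpend
    exact (pending_iff f g (hh f g x)).mp hpend x ⟨rfl, hc⟩ hx

theorem exists_child_of_center {x : U ⊕ V} (hx : ¬ pending f g x) :
    ∃ y, hh f g y = x ∧ pending f g y := by
  rw [pending_iff] at hx
  push_neg at hx
  obtain ⟨y, hy, hpy⟩ := hx
  exact ⟨y, hy.1, hpy⟩


def Fset : Finset (U × V) :=
  univ.filter (fun p : U × V =>
    (pending f g (Sum.inl p.1) ∧ hh f g (Sum.inl p.1) = Sum.inr p.2) ∨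
    (pending f g (Sum.inr p.2) ∧ hh f g (Sum.inr p.2) = Sum.inl p.1))

theorem mem_Fset {p : U × V} : p ∈ Fset f g ↔
    (pending f g (Sum.inl p.1) ∧ hh f g (Sum.inl p.1) = Sum.inr p.2) ∨
    (pending f g (Sum.inr p.2) ∧ hh f g (Sum.inr p.2) = Sum.inl p.1) := by
  simp [Fset]

def ctr (p : U × V) : U ⊕ V :=
  if pending f g (Sum.inl p.1) then Sum.inr p.2 else Sum.inl p.1

theorem ctr_mem (p : U × V) : ctr f g p = Sum.inl p.1 ∨ ctr f g p = Sum.inr p.2 := by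
  unfold ctr; split_ifs
  · right; rfl
  · left; rfl

theorem fact1 {p : U × V} (hp : p ∈ Fset f g) :
    (pending f g (Sum.inl p.1) ∧ hh f g (Sum.inl p.1) = Sum.inr p.2 ∧
      ¬ pending f g (Sum.inr p.2)) ∨
    (pending f g (Sum.inr p.2) ∧ hh f g (Sum.inr p.2) = Sum.inl p.1 ∧
      ¬ pending f g (Sum.inl p.1)) := by
  rw [mem_Fset] at hp
  rcases hp with ⟨h1, h2⟩ | ⟨h1, h2⟩
  · exact Or.inl ⟨h1, h2, by rw [← h2]; exact not_pending_hh f g h1⟩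
  · exact Or.inr ⟨h1, h2, by rw [← h2]; exact not_pending_hh f g h1⟩

theorem ctr_eq {p q : U × V} (hp : p ∈ Fset f g) (hq : q ∈ Fset f g)
    (hshare : p.1 = q.1 ∨ p.2 = q.2) : ctr f g p = ctr f g q := by
  rcases hshare with h1 | h2
  · by_cases hpd : pending f g (Sum.inl p.1)
    · have hqd : pending f g (Sum.inl q.1) := by rw [← h1]; exact hpd
      have hp2 : hh f g (Sum.inl p.1) = Sum.inr p.2 := by
        rcases fact1 f g hp with ⟨_, a2, _⟩ | ⟨_, _, a3⟩
        · exact a2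
        · exact absurd hpd a3
      have hq2 : hh f g (Sum.inl q.1) = Sum.inr q.2 := by
        rcases fact1 f g hq with ⟨_, a2, _⟩ | ⟨_, _, a3⟩
        · exact a2
        · exact absurd hqd a3
      have : Sum.inr (α := U) p.2 = Sum.inr q.2 := by rw [← hp2, ← hq2, h1]
      unfold ctr
      rw [if_pos hpd, if_pos hqd, this]
    · have hqd : ¬ pending f g (Sum.inl q.1) := by rw [← h1]; exact hpd
      unfold ctr
      rw [if_neg hpd, if_neg hqd, h1]
  · by_cases hpd : pending f g (Sum.inr p.2)
    · have hqd : pending f g (Sum.inr q.2) := by rw [← h2]; exact hpd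
      have hp3 : hh f g (Sum.inr p.2) = Sum.inl p.1 ∧ ¬ pending f g (Sum.inl p.1) := by
        rcases fact1 f g hp with ⟨_, _, a3⟩ | ⟨_, a2, a3⟩
        · exact absurd hpd a3
        · exact ⟨a2, a3⟩
      have hq3 : hh f g (Sum.inr q.2) = Sum.inl q.1 ∧ ¬ pending f g (Sum.inl q.1) := by
        rcases fact1 f g hq with ⟨_, _, a3⟩ | ⟨_, a2, a3⟩
        · exact absurd hqd a3
        · exact ⟨a2, a3⟩
      have : Sum.inl (β := V) p.1 = Sum.inl q.1 := by rw [← hp3.1, ← hq3.1, h2]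
      unfold ctr
      rw [if_neg hp3.2, if_neg hq3.2, this]
    · have hqd : ¬ pending f g (Sum.inr q.2) := by rw [← h2]; exact hpd
      have hp1 : pending f g (Sum.inl p.1) := by
        rcases fact1 f g hp with ⟨a1, _, _⟩ | ⟨a1, _, _⟩
        · exact a1
        · exact absurd a1 hpd
      have hq1 : pending f g (Sum.inl q.1) := by
        rcases fact1 f g hq with ⟨a1, _, _⟩ | ⟨a1, _, _⟩
        · exact a1
        · exact absurd a1 hqd
      unfold ctr
      rw [if_pos hp1, if_pos hq1, h2]

def cls : U ⊕ V → U ⊕ V := fun x =>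
  if hx : ∃ p, p ∈ Fset f g ∧ (x = Sum.inl p.1 ∨ x = Sum.inr p.2) then
    ctr f g hx.choose
  else x

theorem cls_eq {x : U ⊕ V} {p : U × V} (hp : p ∈ Fset f g)
    (hxp : x = Sum.inl p.1 ∨ x = Sum.inr p.2) : cls f g x = ctr f g p := by
  have hx : ∃ q, q ∈ Fset f g ∧ (x = Sum.inl q.1 ∨ x = Sum.inr q.2) := ⟨p, hp, hxp⟩
  rw [cls, dif_pos hx]
  obtain ⟨hq1, hq2⟩ := hx.choose_spec
  apply ctr_eq f g hq1 hp
  rcases hq2 with h | h <;> rcases hxp with h' | h' <;> rw [h] at h'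
  · exact Or.inl (Sum.inl_injective h')
  · exact absurd h' (by simp)
  · exact absurd h'.symm (by simp)
  · exact Or.inr (Sum.inr_injective h')


theorem cls_adj {x y : U ⊕ V}
    (h : (mkGraph (Fset f g)).Adj x y) : cls f g x = cls f g y := by
  rw [mkGraph, SimpleGraph.fromRel_adj] at h
  obtain ⟨-, h⟩ := h
  rcases h with ⟨p, hp, h1, h2⟩ | ⟨p, hp, h1, h2⟩
  · rw [cls_eq f g hp (Or.inl h1), cls_eq f g hp (Or.inr h2)]
  · rw [cls_eq f g hp (Or.inr h2), cls_eq f g hp (Or.inl h1)]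

theorem cls_walk {x y : U ⊕ V} (h : (mkGraph (Fset f g)).Walk x y) :
    cls f g x = cls f g y := by
  induction h with
  | nil => rfl
  | cons hadj _ ih => exact (cls_adj f g hadj).trans ih

theorem main {k : ℕ} (E : Finset (U × V))
    (hf : ∀ u, (u, f u) ∈ E) (hg : ∀ v, (g v, v) ∈ E)
    (hfk : ∀ v, (univ.filter fun u => f u = v).card ≤ k)
    (hgk : ∀ u, (univ.filter fun v => g v = u).card ≤ k) :
    IsStarCover k E (Fset f g) := by
  refine ⟨?_, ?_, ?_⟩
  · -- Fset ⊆ E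
    intro p hp
    rw [mem_Fset] at hp
    rcases hp with ⟨-, h2⟩ | ⟨-, h2⟩
    · exact edgeL f g hf h2
    · exact edgeR f g hf hg h2
  · -- coverage
    intro x
    by_cases hx : pending f g x
    · cases x with
      | inl u =>
        cases hhh : hh f g (Sum.inl u) with
        | inl u' =>
          exfalso
          have := side_hh f g (Sum.inl u)
          rw [hhh] at this
          simp at this
        | inr v =>
          exact ⟨(u, v), (mem_Fset f g).mpr (Or.inl ⟨hx, hhh⟩), Or.inl rfl⟩
      | inr v =>
        cases hhh : hh f g (Sum.inr v) with
        | inl u =>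
          exact ⟨(u, v), (mem_Fset f g).mpr (Or.inr ⟨hx, hhh⟩), Or.inr rfl⟩
        | inr v' =>
          exfalso
          have := side_hh f g (Sum.inr v)
          rw [hhh] at this
          simp at this
    · obtain ⟨y, hy, hpy⟩ := exists_child_of_center f g hx
      cases y with
      | inl u =>
        cases hhh : hh f g (Sum.inl u) with
        | inl u' =>
          exfalso
          have := side_hh f g (Sum.inl u)
          rw [hhh] at this
          simp at this
        | inr v =>
          refine ⟨(u, v), (mem_Fset f g).mpr (Or.inl ⟨hpy, hhh⟩), Or.inr ?_⟩
          rw [← hy, hhh]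
      | inr v =>
        cases hhh : hh f g (Sum.inr v) with
        | inl u =>
          refine ⟨(u, v), (mem_Fset f g).mpr (Or.inr ⟨hpy, hhh⟩), Or.inl ?_⟩
          rw [← hy, hhh]
        | inr v' =>
          exfalso
          have := side_hh f g (Sum.inr v)
          rw [hhh] at this
          simp at this
  · -- components
    intro c
    by_cases hne : (componentEdges (Fset f g) c).Nonempty
    · obtain ⟨p₀, hp₀⟩ := hne
      have hp₀' : p₀ ∈ Fset f g ∧ (mkGraph (Fset f g)).connectedComponentMk (Sum.inl p₀.1) = c := by
        simpa [componentEdges] using hp₀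
      have key : ∀ p ∈ componentEdges (Fset f g) c, ctr f g p = ctr f g p₀ := by
        intro p hp
        have hp' : p ∈ Fset f g ∧ (mkGraph (Fset f g)).connectedComponentMk (Sum.inl p.1) = c := by
          simpa [componentEdges] using hp
        have hreach : (mkGraph (Fset f g)).Reachable (Sum.inl p.1) (Sum.inl p₀.1) :=
          SimpleGraph.ConnectedComponent.exact (hp'.2.trans hp₀'.2.symm)
        obtain ⟨w⟩ := hreach
        have := cls_walk f g w
        rw [cls_eq f g hp'.1 (Or.inl rfl), cls_eq f g hp₀'.1 (Or.inl rfl)] at this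
        exact this
      constructor
      · cases hz : ctr f g p₀ with
        | inl u =>
          have hmap : ∀ p ∈ componentEdges (Fset f g) c,
              Sum.inr p.2 ∈ univ.filter (fun y => hh f g y = Sum.inl u) ∧ p.1 = u := by
            intro p hp
            have hc := (key p hp).trans hz
            have hp' : p ∈ Fset f g := (mem_filter.mp hp).1
            have hnp : ¬ pending f g (Sum.inl p.1) ∧ p.1 = u := by
              by_cases hpd : pending f g (Sum.inl p.1)
              · unfold ctr at hc
                rw [if_pos hpd] at hc
                exact absurd hc (by simp)
              · unfold ctr at hc
                rw [if_neg hpd] at hc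
                exact ⟨hpd, Sum.inl_injective hc⟩
            have hd2 : pending f g (Sum.inr p.2) ∧ hh f g (Sum.inr p.2) = Sum.inl p.1 := by
              rcases fact1 f g hp' with ⟨a1, _, _⟩ | ⟨a1, a2, _⟩
              · exact absurd a1 hnp.1
              · exact ⟨a1, a2⟩
            refine ⟨?_, hnp.2⟩
            simp only [mem_filter, mem_univ, true_and]
            rw [hd2.2, hnp.2]
          calc (componentEdges (Fset f g) c).card
              ≤ (univ.filter (fun y => hh f g y = Sum.inl u)).card := by
                apply Finset.card_le_card_of_injOn (fun p => Sum.inr p.2)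
                · intro p hp; exact (hmap p hp).1
                · intro p hp q hq hpq
                  have hp' := Finset.mem_coe.mp hp
                  have hq' := Finset.mem_coe.mp hq
                  have h2 : p.2 = q.2 := Sum.inr_injective hpq
                  have h1 : p.1 = q.1 := ((hmap p hp').2).trans ((hmap q hq').2).symm
                  exact Prod.ext h1 h2
            _ ≤ k := fiber_hh_left f g hgk u
        | inr v =>
          have hmap : ∀ p ∈ componentEdges (Fset f g) c,
              Sum.inl p.1 ∈ univ.filter (fun y => hh f g y = Sum.inr v) ∧ p.2 = v := by
            intro p hp
            have hc := (key p hp).trans hz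
            have hp' : p ∈ Fset f g := (mem_filter.mp hp).1
            have hnp : pending f g (Sum.inl p.1) ∧ p.2 = v := by
              by_cases hpd : pending f g (Sum.inl p.1)
              · unfold ctr at hc
                rw [if_pos hpd] at hc
                exact ⟨hpd, Sum.inr_injective hc⟩
              · unfold ctr at hc
                rw [if_neg hpd] at hc
                exact absurd hc (by simp)
            have hd1 : hh f g (Sum.inl p.1) = Sum.inr p.2 := by
              rcases fact1 f g hp' with ⟨_, a2, _⟩ | ⟨_, _, a3⟩
              · exact a2
              · exact absurd hnp.1 a3
            refine ⟨?_, hnp.2⟩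
            simp only [mem_filter, mem_univ, true_and]
            rw [hd1, hnp.2]
          calc (componentEdges (Fset f g) c).card
              ≤ (univ.filter (fun y => hh f g y = Sum.inr v)).card := by
                apply Finset.card_le_card_of_injOn (fun p => Sum.inl p.1)
                · intro p hp; exact (hmap p hp).1
                · intro p hp q hq hpq
                  have hp' := Finset.mem_coe.mp hp
                  have hq' := Finset.mem_coe.mp hq
                  have h1 : p.1 = q.1 := Sum.inl_injective hpq
                  have h2 : p.2 = q.2 := ((hmap p hp').2).trans ((hmap q hq').2).symm
                  exact Prod.ext h1 h2
            _ ≤ k := fiber_hh_right f g hfk v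
      · refine ⟨ctr f g p₀, fun p hp => ?_⟩
        rcases ctr_mem f g p with h | h
        · exact Or.inl (h.symm.trans (key p hp))
        · exact Or.inr (h.symm.trans (key p hp))
    · rw [Finset.not_nonempty_iff_eq_empty] at hne
      rw [hne]
      obtain ⟨x₀, -⟩ := c.exists_rep
      exact ⟨by simp, ⟨x₀, by simp⟩⟩

theorem hall_fibers {ι β : Type*} [Fintype ι] [Fintype β] {k : ℕ} (n : ι → Finset β)
    (hn : ∀ S : Finset ι, S.card ≤ k * (S.biUnion n).card) :
    ∃ f : ι → β, (∀ i, f i ∈ n i) ∧ ∀ b, (univ.filter fun i => f i = b).card ≤ k := by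
  have cond : ∀ s : Finset ι, s.card ≤ (s.biUnion (fun i => (n i) ×ˢ (univ : Finset (Fin k)))).card := by
    intro s
    have heq : s.biUnion (fun i => (n i) ×ˢ (univ : Finset (Fin k))) =
        (s.biUnion n) ×ˢ (univ : Finset (Fin k)) := by
      ext q
      simp only [Finset.mem_biUnion, Finset.mem_product, Finset.mem_univ, and_true]
    rw [heq, Finset.card_product]
    simpa [mul_comm] using hn s
  obtain ⟨F, hinj, hmem⟩ := (Finset.all_card_le_biUnion_card_iff_exists_injective
    (fun i => (n i) ×ˢ (univ : Finset (Fin k)))).mp cond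
  refine ⟨fun i => (F i).1, fun i => (Finset.mem_product.mp (hmem i)).1, fun b => ?_⟩
  refine le_trans (Finset.card_le_card_of_injOn (fun i => (F i).2)
    (fun i _ => Finset.mem_univ _) ?_) (by simp)
  intro i hi j hj hij
  have hi' : (F i).1 = b := by simpa using hi
  have hj' : (F j).1 = b := by simpa using hj
  apply hinj
  exact Prod.ext (hi'.trans hj'.symm) hij

end SCaux

theorem stmt_11 {U V : Type*} [Fintype U] [Fintype V] (k : ℕ) (hk : 1 ≤ k)
    (E : Finset (U × V))
    (hNL : ∀ S : Finset U, (1 / (k : ℝ)) * S.card ≤ ((nbhd E S).card : ℝ))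
    (hNR : ∀ S : Finset V, (1 / (k : ℝ)) * S.card ≤ ((nbhdR E S).card : ℝ)) :
    ∃ F : Finset (U × V), IsStarCover k E F := by
  classical
  have hk0 : (0 : ℝ) < k := by exact_mod_cast hk
  -- left semi-matching
  have hL : ∀ S : Finset U, S.card ≤ k * (S.biUnion (fun u => nbhd E {u})).card := by
    intro S
    have heq : S.biUnion (fun u => nbhd E {u}) = nbhd E S := by
      ext v
      simp only [Finset.mem_biUnion, nbhd, Finset.mem_image, Finset.mem_filter,
        Finset.mem_singleton]
      constructor
      · rintro ⟨u, hu, p, ⟨hpE, hp1⟩, hp2⟩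
        exact ⟨p, ⟨hpE, hp1 ▸ hu⟩, hp2⟩
      · rintro ⟨p, ⟨hpE, hp1⟩, hp2⟩
        exact ⟨p.1, hp1, p, ⟨hpE, rfl⟩, hp2⟩
    rw [heq]
    have h1 := hNL S
    have h2 : (S.card : ℝ) ≤ k * ((nbhd E S).card : ℝ) := by
      calc (S.card : ℝ) = k * ((1 / (k : ℝ)) * S.card) := by field_simp
        _ ≤ k * ((nbhd E S).card : ℝ) := by
            exact mul_le_mul_of_nonneg_left h1 hk0.le
    exact_mod_cast h2
  obtain ⟨f, hf, hfk⟩ := SCaux.hall_fibers (fun u => nbhd E {u}) hL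
  have hfE : ∀ u, (u, f u) ∈ E := by
    intro u
    have := hf u
    simp only [nbhd, Finset.mem_image, Finset.mem_filter, Finset.mem_singleton] at this
    obtain ⟨p, ⟨hpE, hp1⟩, hp2⟩ := this
    have hpe : p = (u, f u) := Prod.ext hp1 hp2
    exact hpe ▸ hpE
  -- right semi-matching
  have hR : ∀ S : Finset V, S.card ≤ k * (S.biUnion (fun v => nbhdR E {v})).card := by
    intro S
    have heq : S.biUnion (fun v => nbhdR E {v}) = nbhdR E S := by
      ext u
      simp only [Finset.mem_biUnion, nbhdR, Finset.mem_image, Finset.mem_filter,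
        Finset.mem_singleton]
      constructor
      · rintro ⟨v, hv, p, ⟨hpE, hp2⟩, hp1⟩
        exact ⟨p, ⟨hpE, hp2 ▸ hv⟩, hp1⟩
      · rintro ⟨p, ⟨hpE, hp2⟩, hp1⟩
        exact ⟨p.2, hp2, p, ⟨hpE, rfl⟩, hp1⟩
    rw [heq]
    have h1 := hNR S
    have h2 : (S.card : ℝ) ≤ k * ((nbhdR E S).card : ℝ) := by
      calc (S.card : ℝ) = k * ((1 / (k : ℝ)) * S.card) := by field_simp
        _ ≤ k * ((nbhdR E S).card : ℝ) := by
            exact mul_le_mul_of_nonneg_left h1 hk0.le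
    exact_mod_cast h2
  obtain ⟨g, hg, hgk⟩ := SCaux.hall_fibers (fun v => nbhdR E {v}) hR
  have hgE : ∀ v, (g v, v) ∈ E := by
    intro v
    have := hg v
    simp only [nbhdR, Finset.mem_image, Finset.mem_filter, Finset.mem_singleton] at this
    obtain ⟨p, ⟨hpE, hp2⟩, hp1⟩ := this
    have hpe : p = (g v, v) := Prod.ext hp1 hp2
    exact hpe ▸ hpE
  exact ⟨SCaux.Fset f g, SCaux.main f g E hfE hgE hfk hgk⟩
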